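/- arXiv:1004.3595 — 6 statements merged into one kernel-verified Lean document; each statement's English description precedes it below -/
import Mathlib

section
/- If A and B are colored subspaces of a colored vector space V, then A ∩ B and A + B are colored, and the signature satisfies ξ(A + B) + ξ(A ∩ B) = ξ(A) + ξ(B). -/
open Module Submodule

lemma sum_finrank_eq_finrank_iSup
    {𝕜 V : Type*} [Field 𝕜] [AddCommGroup V] [Module 𝕜 V] [FiniteDimensional 𝕜 V]
    {ι : Type*} [Fintype ι] [DecidableEq ι] {W : ι → Submodule 𝕜 V}
    (h : iSupIndep W) :
    ∑ i, finrank 𝕜 ↥(W i) = finrank 𝕜 ↥(⨆ i, W i) := by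
  classical
  have key : ∀ s : Finset ι, ∑ i ∈ s, finrank 𝕜 ↥(W i) = finrank 𝕜 ↥(⨆ i ∈ s, W i) := by
    intro s
    refine Finset.induction_on s ?_ ?_
    · rw [show (⨆ i ∈ (∅ : Finset ι), W i) = ⊥ by
          simp only [Finset.notMem_empty, iSup_false, iSup_bot]]
      simp
    · intro a s ha ih
      rw [Finset.sum_insert ha, ih]
      have hsup : (⨆ i ∈ insert a s, W i) = W a ⊔ ⨆ i ∈ s, W i := Finset.iSup_insert a s W
      have hdisj : Disjoint (W a) (⨆ i ∈ s, W i) := by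
        refine (h a).mono_right ?_
        refine iSup₂_le fun i hi => ?_
        exact le_iSup₂_of_le i (by rintro rfl; exact ha hi) le_rfl
      have := Submodule.finrank_sup_add_finrank_inf_eq (W a) (⨆ i ∈ s, W i)
      rw [disjoint_iff.mp hdisj] at this
      simp only [finrank_bot, add_zero] at this
      rw [hsup, this]
  have huniv : (⨆ i ∈ Finset.univ, W i) = ⨆ i, W i :=
    iSup_congr fun i => iSup_pos (Finset.mem_univ i)
  rw [key Finset.univ, huniv]

/-- If `A` and `B` are colored subspaces of a colored vector space `V`,
then `A ⊓ B` and `A ⊔ B` are colored, and `ξ(A ⊔ B) + ξ(A ⊓ B) = ξ(A) + ξ(B)`. -/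
theorem colored_inf_sup_signature
    {𝕜 V : Type*} [Field 𝕜] [AddCommGroup V] [Module 𝕜 V] [FiniteDimensional 𝕜 V]
    {n : ℕ} (Vc : Fin n → Submodule 𝕜 V) (hV : DirectSum.IsInternal Vc)
    (A B : Submodule 𝕜 V)
    (hA : finrank 𝕜 ↥A = ∑ i, finrank 𝕜 ↥(A ⊓ Vc i))
    (hB : finrank 𝕜 ↥B = ∑ i, finrank 𝕜 ↥(B ⊓ Vc i)) :
    (finrank 𝕜 ↥(A ⊓ B) = ∑ i, finrank 𝕜 ↥(A ⊓ B ⊓ Vc i)) ∧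
    (finrank 𝕜 ↥(A ⊔ B) = ∑ i, finrank 𝕜 ↥((A ⊔ B) ⊓ Vc i)) ∧
    (∀ i, finrank 𝕜 ↥((A ⊔ B) ⊓ Vc i) + finrank 𝕜 ↥(A ⊓ B ⊓ Vc i)
        = finrank 𝕜 ↥(A ⊓ Vc i) + finrank 𝕜 ↥(B ⊓ Vc i)) := by
  classical
  have indep : iSupIndep Vc := hV.submodule_iSupIndep
  -- For any subspace U, ∑ finrank (U ⊓ Vc i) ≤ finrank U.
  have sumle : ∀ U : Submodule 𝕜 V,
      ∑ i, finrank 𝕜 ↥(U ⊓ Vc i) ≤ finrank 𝕜 ↥U := by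
    intro U
    have hind : iSupIndep (fun i => U ⊓ Vc i) :=
      indep.mono fun i => inf_le_right
    rw [sum_finrank_eq_finrank_iSup hind]
    exact Submodule.finrank_mono (iSup_le fun i => inf_le_left)
  -- per-index sup/inf dimension formula
  have hinf : ∀ i : Fin n, (A ⊓ Vc i) ⊓ (B ⊓ Vc i) = A ⊓ B ⊓ Vc i := by
    intro i
    rw [inf_inf_inf_comm, inf_idem]
  have per : ∀ i : Fin n,
      finrank 𝕜 ↥((A ⊓ Vc i) ⊔ (B ⊓ Vc i)) + finrank 𝕜 ↥(A ⊓ B ⊓ Vc i)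
        = finrank 𝕜 ↥(A ⊓ Vc i) + finrank 𝕜 ↥(B ⊓ Vc i) := by
    intro i
    rw [← hinf i]
    exact Submodule.finrank_sup_add_finrank_inf_eq _ _
  -- s i ≤ c i
  have sle : ∀ i : Fin n,
      finrank 𝕜 ↥((A ⊓ Vc i) ⊔ (B ⊓ Vc i)) ≤ finrank 𝕜 ↥((A ⊔ B) ⊓ Vc i) := by
    intro i
    refine Submodule.finrank_mono (sup_le ?_ ?_)
    · exact le_inf (inf_le_left.trans le_sup_left) inf_le_right
    · exact le_inf (inf_le_left.trans le_sup_right) inf_le_right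
  have E1 : finrank 𝕜 ↥(A ⊔ B) + finrank 𝕜 ↥(A ⊓ B)
      = ∑ i, finrank 𝕜 ↥(A ⊓ Vc i) + ∑ i, finrank 𝕜 ↥(B ⊓ Vc i) := by
    rw [Submodule.finrank_sup_add_finrank_inf_eq A B, hA, hB]
  have E2 : ∑ i, finrank 𝕜 ↥((A ⊓ Vc i) ⊔ (B ⊓ Vc i)) + ∑ i, finrank 𝕜 ↥(A ⊓ B ⊓ Vc i)
      = ∑ i, finrank 𝕜 ↥(A ⊓ Vc i) + ∑ i, finrank 𝕜 ↥(B ⊓ Vc i) := by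
    rw [← Finset.sum_add_distrib, ← Finset.sum_add_distrib]
    exact Finset.sum_congr rfl fun i _ => per i
  have I1 : ∑ i, finrank 𝕜 ↥(A ⊓ B ⊓ Vc i) ≤ finrank 𝕜 ↥(A ⊓ B) := by
    have := sumle (A ⊓ B)
    simpa using this
  have I2 : ∑ i, finrank 𝕜 ↥((A ⊔ B) ⊓ Vc i) ≤ finrank 𝕜 ↥(A ⊔ B) := sumle (A ⊔ B)
  have I3 : ∑ i, finrank 𝕜 ↥((A ⊓ Vc i) ⊔ (B ⊓ Vc i)) ≤ ∑ i, finrank 𝕜 ↥((A ⊔ B) ⊓ Vc i) :=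
    Finset.sum_le_sum fun i _ => sle i
  have hX : finrank 𝕜 ↥(A ⊔ B) = ∑ i, finrank 𝕜 ↥((A ⊔ B) ⊓ Vc i) := by omega
  have hY : finrank 𝕜 ↥(A ⊓ B) = ∑ i, finrank 𝕜 ↥(A ⊓ B ⊓ Vc i) := by omega
  have hSC : ∑ i, finrank 𝕜 ↥((A ⊓ Vc i) ⊔ (B ⊓ Vc i)) = ∑ i, finrank 𝕜 ↥((A ⊔ B) ⊓ Vc i) := by
    omega
  have hsc : ∀ i, finrank 𝕜 ↥((A ⊓ Vc i) ⊔ (B ⊓ Vc i)) = finrank 𝕜 ↥((A ⊔ B) ⊓ Vc i) :=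
    fun i => (Finset.sum_eq_sum_iff_of_le fun i _ => sle i).mp hSC i (Finset.mem_univ i)
  exact ⟨hY, hX, fun i => by rw [← hsc i]; exact per i⟩
end

section
/- Every subspace W of a colored vector space V admits a colored complement: there exists a colored subspace U ⊆ V with V = U ⊕ W. -/
open Module Submodule

private lemma finrank_iSup_of_indep
    {𝕜 V : Type*} [Field 𝕜] [AddCommGroup V] [Module 𝕜 V] [FiniteDimensional 𝕜 V] :
    ∀ {m : ℕ} (p : Fin m → Submodule 𝕜 V), iSupIndep p →
      finrank 𝕜 ↥(⨆ i, p i) = ∑ i, finrank 𝕜 ↥(p i) := by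
  intro m
  induction m with
  | zero => intro p _; simp
  | succ m ih =>
    intro p hp
    have hsup : (⨆ i, p i) = (⨆ i : Fin m, p i.castSucc) ⊔ p (Fin.last m) := by
      apply le_antisymm
      · refine iSup_le fun i => ?_
        refine Fin.lastCases ?_ (fun j => ?_) i
        · exact le_sup_right
        · exact le_sup_of_le_left (le_iSup (fun i : Fin m => p i.castSucc) j)
      · exact sup_le (iSup_le fun j => le_iSup p _) (le_iSup p _)
    have hdisj : Disjoint (⨆ i : Fin m, p i.castSucc) (p (Fin.last m)) := by
      refine Disjoint.symm ((hp (Fin.last m)).mono_right ?_)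
      refine iSup_le fun j => ?_
      exact le_iSup₂_of_le j.castSucc (Fin.castSucc_lt_last j).ne le_rfl
    rw [hsup, Fin.sum_univ_castSucc, ← ih (fun i => p i.castSucc) (hp.comp (Fin.castSucc_injective m)),
      ← Submodule.finrank_sup_add_finrank_inf_eq, hdisj.eq_bot, finrank_bot, add_zero]

private lemma exists_homog_compl
    {𝕜 V : Type*} [Field 𝕜] [AddCommGroup V] [Module 𝕜 V] [FiniteDimensional 𝕜 V]
    {n : ℕ} (Vc : Fin n → Submodule 𝕜 V) (hV : DirectSum.IsInternal Vc) :
    ∀ (k : ℕ) (W : Submodule 𝕜 V), finrank 𝕜 V ≤ finrank 𝕜 ↥W + k →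
      ∃ s : Set V, (∀ v ∈ s, ∃ i, v ∈ Vc i) ∧ IsCompl (span 𝕜 s) W := by
  intro k
  induction k with
  | zero =>
    intro W hW
    have : W = ⊤ := Submodule.eq_top_of_finrank_eq
      (le_antisymm (Submodule.finrank_le W) (by simpa using hW))
    refine ⟨∅, by simp, ?_⟩
    rw [this, Submodule.span_empty]
    exact isCompl_bot_top
  | succ k ih =>
    intro W hW
    by_cases hWtop : W = ⊤
    · refine ⟨∅, by simp, ?_⟩
      rw [hWtop, Submodule.span_empty]
      exact isCompl_bot_top
    · -- find a homogeneous vector not in W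
      have hex : ∃ i, ¬ Vc i ≤ W := by
        by_contra h
        push_neg at h
        exact hWtop (top_unique (hV.submodule_iSup_eq_top ▸ iSup_le h))
      obtain ⟨i, hi⟩ := hex
      obtain ⟨v, hvVc, hvW⟩ := SetLike.not_le_iff_exists.mp hi
      set W' := W ⊔ span 𝕜 {v} with hW'
      have hlt : W < W' := by
        refine lt_of_le_of_ne le_sup_left fun h => hvW ?_
        rw [h]; exact le_sup_right (a := W) (Submodule.mem_span_singleton_self v)
      have hrank : finrank 𝕜 V ≤ finrank 𝕜 ↥W' + k := by
        have := Submodule.finrank_lt_finrank_of_lt hlt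
        omega
      obtain ⟨s, hsh, hsc⟩ := ih W' hrank
      refine ⟨insert v s, ?_, ?_⟩
      · rintro w (rfl | hw)
        · exact ⟨i, hvVc⟩
        · exact hsh w hw
      · constructor
        · -- disjoint
          rw [disjoint_iff_inf_le]
          rintro x ⟨hx1, hx2⟩
          rw [SetLike.mem_coe, Submodule.mem_span_insert] at hx1
          obtain ⟨c, z, hz, rfl⟩ := hx1
          have hzW' : z ∈ W' := by
            have h0 : z = (c • v + z) - c • v := (add_sub_cancel_left _ _).symm
            rw [h0]
            exact sub_mem (le_sup_left (α := Submodule 𝕜 V) hx2)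
              (smul_mem _ _ (le_sup_right (α := Submodule 𝕜 V)
                (Submodule.mem_span_singleton_self v)))
          have hz0 : z = 0 := by
            have := hsc.disjoint.le_bot ⟨hz, hzW'⟩
            simpa using this
          subst hz0
          rw [add_zero] at hx2 ⊢
          rcases eq_or_ne c 0 with rfl | hc
          · simp
          · have hvm := W.smul_mem c⁻¹ hx2
            rw [smul_smul, inv_mul_cancel₀ hc, one_smul] at hvm
            exact absurd hvm hvW
        · -- codisjoint
          rw [codisjoint_iff]
          have : span 𝕜 (insert v s) = span 𝕜 s ⊔ span 𝕜 {v} := by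
            rw [Submodule.span_insert, sup_comm]
          rw [this, sup_assoc, sup_comm (span 𝕜 {v}) W, ← hW',
            ← codisjoint_iff.mp hsc.codisjoint, sup_comm]

/-- Every subspace `W` of a colored vector space `V` admits a colored
complement: a colored subspace `U` with `V = U ⊕ W`. -/
theorem exists_colored_complement
    {𝕜 V : Type*} [Field 𝕜] [AddCommGroup V] [Module 𝕜 V] [FiniteDimensional 𝕜 V]
    {n : ℕ} (Vc : Fin n → Submodule 𝕜 V) (hV : DirectSum.IsInternal Vc)
    (W : Submodule 𝕜 V) :
    ∃ U : Submodule 𝕜 V,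
      (finrank 𝕜 ↥U = ∑ i, finrank 𝕜 ↥(U ⊓ Vc i)) ∧ IsCompl U W := by
  obtain ⟨s, hsh, hsc⟩ := exists_homog_compl Vc hV (finrank 𝕜 V) W (by omega)
  set U := span 𝕜 s with hU
  have hUeq : U = ⨆ i, U ⊓ Vc i := by
    apply le_antisymm
    · rw [hU, Submodule.span_le]
      intro v hv
      obtain ⟨i, hvi⟩ := hsh v hv
      exact le_iSup (fun i => U ⊓ Vc i) i ⟨Submodule.subset_span hv, hvi⟩
    · exact iSup_le fun i => inf_le_left
  have hindep : iSupIndep fun i => U ⊓ Vc i :=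
    hV.submodule_iSupIndep.mono fun i => inf_le_right
  refine ⟨U, ?_, hsc⟩
  calc finrank 𝕜 ↥U = finrank 𝕜 ↥(⨆ i, U ⊓ Vc i) := by rw [← hUeq]
    _ = ∑ i, finrank 𝕜 ↥(U ⊓ Vc i) := finrank_iSup_of_indep _ hindep
end

section
/- Every σ-colored nilpotent endomorphism x of a colored vector space V, where σ is the n-cycle i ↦ i+1 mod n, admits a colored Jordan basis: a basis of V consisting of colored vectors that is x-stable (as a set, with x sending each basis vector to another basis vector or to 0) and contains a basis of ker x. -/
open Module Submodule DirectSum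

set_option linter.unusedSectionVars false

section ColoredJordanAux
variable {𝕜 V : Type*} [Field 𝕜] [AddCommGroup V] [Module 𝕜 V] [FiniteDimensional 𝕜 V]
  {n : ℕ} [NeZero n] {Vc : ZMod n → Submodule 𝕜 V} {π : ZMod n → Module.End 𝕜 V}

lemma homog_extend (hπmem : ∀ i (v : V), π i v ∈ Vc i) (hπsum : ∀ v : V, ∑ i, π i v = v)
    (K : Submodule 𝕜 V) (hKg : ∀ v ∈ K, ∀ i, π i v ∈ K) :
    ∀ (d : ℕ) (C' : Set V), C' ⊆ (K : Set V) → LinearIndependent 𝕜 ((↑) : C' → V) →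
      (∀ v ∈ C', ∃ i, v ∈ Vc i) → finrank 𝕜 K ≤ finrank 𝕜 (span 𝕜 C') + d →
      ∃ C : Set V, C' ⊆ C ∧ C ⊆ (K : Set V) ∧ LinearIndependent 𝕜 ((↑) : C → V) ∧
        (∀ v ∈ C, ∃ i, v ∈ Vc i) ∧ span 𝕜 C = K := by
  intro d
  induction d with
  | zero =>
    intro C' hsub hind hcol hrk
    refine ⟨C', le_rfl, hsub, hind, hcol, ?_⟩
    have h1 : span 𝕜 C' ≤ K := span_le.mpr hsub
    exact Submodule.eq_of_le_of_finrank_le h1 (by simpa using hrk)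
  | succ d ih =>
    intro C' hsub hind hcol hrk
    by_cases h : (K : Set V) ⊆ (span 𝕜 C' : Set V)
    · refine ⟨C', le_rfl, hsub, hind, hcol, ?_⟩
      exact le_antisymm (span_le.mpr hsub) h
    · obtain ⟨w, hwK, hwns⟩ : ∃ w ∈ K, w ∉ span 𝕜 C' := by
        simpa [Set.subset_def] using h
      obtain ⟨i, hi⟩ : ∃ i, π i w ∉ span 𝕜 C' := by
        by_contra hc
        push_neg at hc
        exact hwns (by rw [← hπsum w]; exact Submodule.sum_mem _ fun i _ => hc i)
      have hvK : π i w ∈ K := hKg w hwK i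
      have hind' : LinearIndependent 𝕜 ((↑) : (insert (π i w) C' : Set V) → V) :=
        LinearIndepOn.id_insert hind hi
      have hlt : span 𝕜 C' < span 𝕜 (insert (π i w) C' : Set V) := by
        refine lt_of_le_of_ne (span_mono (Set.subset_insert _ _)) fun he => ?_
        exact hi (he ▸ subset_span (Set.mem_insert _ _))
      have hrk' : finrank 𝕜 K ≤ finrank 𝕜 (span 𝕜 (insert (π i w) C' : Set V)) + d := by
        have := Submodule.finrank_lt_finrank_of_lt hlt
        omega
      obtain ⟨C, h1, h2, h3, h4, h5⟩ := ih (insert (π i w) C')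
        (Set.insert_subset hvK hsub) hind'
        (by rintro v (rfl | hv); exacts [⟨i, hπmem i w⟩, hcol v hv]) hrk'
      exact ⟨C, (Set.subset_insert _ _).trans h1, h2, h3, h4, h5⟩

lemma ncard_eq_finrank_span {s : Set V} (hs : LinearIndependent 𝕜 ((↑) : s → V)) :
    s.ncard = finrank 𝕜 (span 𝕜 s) := by
  classical
  have hfin : s.Finite := hs.setFinite
  letI := hfin.fintype
  rw [finrank_span_set_eq_card hs, Set.ncard_eq_toFinset_card' s]

lemma finrank_span_le_ncard (s : Set V) (hfin : s.Finite) :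
    finrank 𝕜 (span 𝕜 s) ≤ s.ncard := by
  classical
  letI := hfin.fintype
  rw [Set.ncard_eq_toFinset_card' s]
  exact finrank_span_le_card s

lemma indep_of_span_of_card {s : Set V} (hfin : s.Finite)
    (h : s.ncard ≤ finrank 𝕜 (span 𝕜 s)) :
    LinearIndependent 𝕜 ((↑) : s → V) := by
  classical
  letI := hfin.fintype
  rw [linearIndependent_iff_card_eq_finrank_span]
  have h2 : (Set.range ((↑) : s → V)) = s := Subtype.range_coe
  have h2' : (Set.range ((↑) : s → V)).finrank 𝕜 = finrank 𝕜 (span 𝕜 s) := by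
    rw [Set.finrank, h2]
  rw [h2', ← Nat.card_eq_fintype_card (α := s), Nat.card_coe_set_eq]
  have h4 := finrank_span_le_ncard (𝕜 := 𝕜) s hfin
  omega

lemma aux_main (hπmem : ∀ i (v : V), π i v ∈ Vc i) (hπsum : ∀ v : V, ∑ i, π i v = v)
    (hπproj : ∀ i (v : V), v ∈ Vc i → π i v = v)
    (x : Module.End 𝕜 V) (hcomm : ∀ i (v : V), π (i+1) (x v) = x (π i v))
    (hnil : IsNilpotent x) :
    ∀ (d : ℕ) (W : Submodule 𝕜 V), finrank 𝕜 W ≤ d → Submodule.map x W ≤ W →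
      (∀ v ∈ W, ∀ i, π i v ∈ W) →
      ∃ B : Set V, B ⊆ (W : Set V) ∧ LinearIndependent 𝕜 ((↑) : B → V) ∧
        span 𝕜 B = W ∧ (∀ v ∈ B, ∃ i, v ∈ Vc i) ∧ (∀ v ∈ B, x v ∈ B ∨ x v = 0) ∧
        ∃ C ⊆ B, span 𝕜 C = LinearMap.ker x ⊓ W := by
  intro d
  induction d with
  | zero =>
    intro W hrk _ _
    have hW : W = ⊥ := by
      rw [← Submodule.finrank_eq_zero (R := 𝕜) (M := V)]; omega
    subst hW
    refine ⟨∅, by simp, linearIndependent_empty _ _, by simp, by simp, by simp, ∅, by simp, by simp⟩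
  | succ d ih =>
    intro W hrk hWx hWg
    by_cases hWbot : W = ⊥
    · subst hWbot
      refine ⟨∅, by simp, linearIndependent_empty _ _, by simp, by simp, by simp, ∅, by simp, by simp⟩
    -- the image subspace
    set W' : Submodule 𝕜 V := Submodule.map x W with hW'def
    have hW'le : W' ≤ W := hWx
    have hW'x : Submodule.map x W' ≤ W' := Submodule.map_mono hWx
    have hW'g : ∀ v ∈ W', ∀ i, π i v ∈ W' := by
      rintro v hv i
      obtain ⟨w, hw, rfl⟩ := hv
      have h1 : π i (x w) = x (π (i - 1) w) := by
        have := hcomm (i - 1) w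
        rwa [sub_add_cancel] at this
      rw [h1]
      exact Submodule.mem_map_of_mem (hWg w hw (i - 1))
    -- the kernel piece
    set K : Submodule 𝕜 V := LinearMap.ker x ⊓ W with hKdef
    have hKg : ∀ v ∈ K, ∀ i, π i v ∈ K := by
      rintro v ⟨hv1, hv2⟩ i
      refine ⟨?_, hWg v hv2 i⟩
      have h0 : x v = 0 := LinearMap.mem_ker.mp hv1
      exact LinearMap.mem_ker.mpr (by rw [← hcomm i v, h0, map_zero])
    -- K is nontrivial
    have hKbot : K ≠ ⊥ := by
      obtain ⟨v, hvW, hv0⟩ := (Submodule.ne_bot_iff W).mp hWbot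
      obtain ⟨m, hm⟩ := hnil
      have hpow : ∀ j, (x ^ j) v ∈ W := by
        intro j
        induction j with
        | zero => simpa using hvW
        | succ j ihj =>
          rw [pow_succ']
          exact hWx (Submodule.mem_map_of_mem ihj)
      have hex : (x ^ m) v = 0 := by rw [hm]; rfl
      have hne : ∃ j, (x ^ j) v = 0 := ⟨m, hex⟩
      classical
      let k0 := Nat.find hne
      have hk0 : (x ^ k0) v = 0 := Nat.find_spec hne
      have hk0ne : k0 ≠ 0 := by
        intro h
        rw [h] at hk0
        simp at hk0
        exact hv0 hk0
      have hlt : k0 - 1 < k0 := by omega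
      have hu0 : (x ^ (k0 - 1)) v ≠ 0 := Nat.find_min hne hlt
      refine (Submodule.ne_bot_iff _).mpr ⟨(x ^ (k0 - 1)) v, ⟨?_, hpow _⟩, hu0⟩
      refine LinearMap.mem_ker.mpr ?_
      have h2 : x ((x ^ (k0 - 1)) v) = (x ^ k0) v := by
        conv_rhs => rw [show k0 = (k0 - 1) + 1 by omega, pow_succ']
        rfl
      rw [h2, hk0]
    -- rank-nullity
    have hrknul : finrank 𝕜 W' + finrank 𝕜 K = finrank 𝕜 W := by
      have h1 := LinearMap.finrank_range_add_finrank_ker (x ∘ₗ W.subtype)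
      have hr : LinearMap.range (x ∘ₗ W.subtype) = W' := by
        rw [LinearMap.range_comp, Submodule.range_subtype]
      have hk0 : LinearMap.ker (x ∘ₗ W.subtype) = Submodule.comap W.subtype (LinearMap.ker x) :=
        LinearMap.ker_comp _ _
      have hk : finrank 𝕜 (LinearMap.ker (x ∘ₗ W.subtype)) = finrank 𝕜 K := by
        rw [hk0, ← Submodule.finrank_map_subtype_eq W, Submodule.map_comap_subtype, hKdef, inf_comm]
      rw [hr, hk] at h1
      exact h1
    have hKpos : 0 < finrank 𝕜 K :=
      Nat.pos_of_ne_zero fun h0 => hKbot (Submodule.finrank_eq_zero.mp h0)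
    have hW'rk : finrank 𝕜 W' ≤ d := by omega
    -- apply IH
    obtain ⟨B', hB'sub, hB'ind, hB'span, hB'col, hB'stab, C', hC'B, hC'span⟩ :=
      ih W' hW'rk hW'x hW'g
    classical
    have hB'fin : B'.Finite := hB'ind.setFinite
    set T : Set V := B' \ (x '' B') with hTdef
    have hTsub : T ⊆ B' := Set.diff_subset
    have hTfin : T.Finite := hB'fin.subset hTsub
    have hchoice : ∀ t ∈ T, ∃ u, u ∈ W ∧ (∃ i, u ∈ Vc i) ∧ x u = t := by
      intro t ht
      obtain ⟨i, hi⟩ := hB'col t (hTsub ht)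
      obtain ⟨w, hwW, hwx⟩ := Submodule.mem_map.mp (hB'sub (hTsub ht))
      refine ⟨π (i - 1) w, hWg w hwW _, ⟨i - 1, hπmem _ _⟩, ?_⟩
      have h2 := hcomm (i - 1) w
      rw [sub_add_cancel] at h2
      rw [← h2, hwx]
      exact hπproj i t hi
    set s : V → V := fun t => if h : t ∈ T then (hchoice t h).choose else 0 with hsdef
    have hs : ∀ t ∈ T, s t ∈ W ∧ (∃ i, s t ∈ Vc i) ∧ x (s t) = t := by
      intro t ht
      simp only [hsdef, dif_pos ht]
      exact (hchoice t ht).choose_spec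
    set S : Set V := s '' T with hSdef
    have hSfin : S.Finite := hTfin.image s
    have hC'K : C' ⊆ (K : Set V) := by
      intro c hc
      have h1 : c ∈ LinearMap.ker x ⊓ W' := hC'span ▸ subset_span hc
      exact ⟨(Submodule.mem_inf.mp h1).1, hW'le (Submodule.mem_inf.mp h1).2⟩
    have hC'ind : LinearIndependent 𝕜 ((↑) : C' → V) := linearIndependent_subtype_iff.mpr (LinearIndepOn.mono (linearIndependent_subtype_iff.mp hB'ind) hC'B)
    have hC'fin : C'.Finite := hC'ind.setFinite
    obtain ⟨C, hC'C, hCK, hCind, hCcol, hCspan⟩ :=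
      homog_extend hπmem hπsum K hKg (finrank 𝕜 K) C' hC'K hC'ind
        (fun v hv => hB'col v (hC'B hv)) (Nat.le_add_left _ _)
    have hCfin : C.Finite := hCind.setFinite
    set B : Set V := B' ∪ S ∪ C with hBdef
    have hBsubW : B ⊆ (W : Set V) := by
      rintro v ((hv | hv) | hv)
      · exact hW'le (hB'sub hv)
      · obtain ⟨t, ht, rfl⟩ := hv
        exact (hs t ht).1
      · exact (Submodule.mem_inf.mp (hCK hv)).2
    have hBcol : ∀ v ∈ B, ∃ i, v ∈ Vc i := by
      rintro v ((hv | hv) | hv)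
      · exact hB'col v hv
      · obtain ⟨t, ht, rfl⟩ := hv
        exact (hs t ht).2.1
      · exact hCcol v hv
    have hBstab : ∀ v ∈ B, x v ∈ B ∨ x v = 0 := by
      rintro v ((hv | hv) | hv)
      · rcases hB'stab v hv with h | h
        · exact Or.inl (Set.mem_union_left _ (Set.mem_union_left _ h))
        · exact Or.inr h
      · obtain ⟨t, ht, rfl⟩ := hv
        rw [(hs t ht).2.2]
        exact Or.inl (Set.mem_union_left _ (Set.mem_union_left _ (hTsub ht)))
      · exact Or.inr (LinearMap.mem_ker.mp (Submodule.mem_inf.mp (hCK hv)).1)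
    have hBspan : span 𝕜 B = W := by
      apply le_antisymm (span_le.mpr hBsubW)
      intro v hvW
      have hB'im : B' ⊆ x '' (B' ∪ S) := by
        intro b hb
        by_cases hbim : b ∈ x '' B'
        · obtain ⟨a, ha, rfl⟩ := hbim
          exact ⟨a, Or.inl ha, rfl⟩
        · have hbT : b ∈ T := ⟨hb, hbim⟩
          exact ⟨s b, Or.inr ⟨b, hbT, rfl⟩, (hs b hbT).2.2⟩
      have h1 : W' ≤ Submodule.map x (span 𝕜 B) := by
        rw [← hB'span]
        refine span_le.mpr ?_
        intro b hb
        obtain ⟨a, ha, rfl⟩ := hB'im hb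
        exact Submodule.mem_map_of_mem (subset_span (Set.mem_union_left _ ha))
      have hxv : x v ∈ Submodule.map x (span 𝕜 B) := h1 (Submodule.mem_map_of_mem hvW)
      obtain ⟨m, hm, hxm⟩ := hxv
      have hvm : v - m ∈ K := by
        refine Submodule.mem_inf.mpr ⟨LinearMap.mem_ker.mpr ?_, ?_⟩
        · rw [map_sub, hxm, sub_self]
        · exact Submodule.sub_mem _ hvW (span_le.mpr hBsubW hm)
      have h2 : v - m ∈ span 𝕜 B := by
        rw [← hCspan] at hvm
        exact span_mono Set.subset_union_right hvm
      have h3 := Submodule.add_mem _ hm h2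
      simpa using h3
    -- cardinality bound
    have hBfin : B.Finite := (hB'fin.union hSfin).union hCfin
    have hinj : Set.InjOn x (B' \ (LinearMap.ker x : Set V)) := by
      rintro b1 ⟨hb1, hk1⟩ b2 ⟨hb2, hk2⟩ heq
      by_contra hne
      have hW'b : ∀ b ∈ B', b ∈ W' := fun b hb => hB'sub hb
      have hsub12 : b1 - b2 ∈ span 𝕜 C' := by
        rw [hC'span]
        exact Submodule.mem_inf.mpr ⟨LinearMap.mem_ker.mpr (by rw [map_sub, heq, sub_self]),
          Submodule.sub_mem _ (hW'b b1 hb1) (hW'b b2 hb2)⟩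
      have hC'sub : C' ⊆ B' \ {b1} := by
        intro c hc
        refine ⟨hC'B hc, fun hcb => ?_⟩
        rw [Set.mem_singleton_iff] at hcb
        subst hcb
        exact hk1 (Submodule.mem_inf.mp (hC'span ▸ subset_span hc)).1
      have hb1mem : b1 ∈ span 𝕜 (B' \ {b1}) := by
        have hx2 : b2 ∈ span 𝕜 (B' \ {b1}) :=
          subset_span ⟨hb2, fun h => hne (Set.mem_singleton_iff.mp h).symm⟩
        have hx3 : b1 - b2 ∈ span 𝕜 (B' \ {b1}) := span_mono hC'sub hsub12
        have hx4 := Submodule.add_mem _ hx2 hx3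
        simpa using hx4
      have himg : ((↑) : ↥B' → V) '' {j : ↥B' | (j : V) ≠ b1} = B' \ {b1} := by
        ext y
        constructor
        · rintro ⟨⟨y', hy'⟩, hne1, rfl⟩
          exact ⟨hy', hne1⟩
        · rintro ⟨hy, hne1⟩
          exact ⟨⟨y, hy⟩, hne1, rfl⟩
      have h5 := hB'ind.notMem_span_image (s := {j : ↥B' | (j : V) ≠ b1})
        (x := ⟨b1, hb1⟩) (by simp)
      rw [himg] at h5
      exact h5 hb1mem
    have himgsub : x '' (B' \ (LinearMap.ker x : Set V)) ⊆ B' ∩ x '' B' := by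
      rintro _ ⟨b, ⟨hb, hk⟩, rfl⟩
      refine ⟨?_, ⟨b, hb, rfl⟩⟩
      rcases hB'stab b hb with h | h
      · exact h
      · exact absurd (LinearMap.mem_ker.mpr h) hk
    have hc1 : (B' \ (LinearMap.ker x : Set V)).ncard ≤ (B' ∩ x '' B').ncard := by
      rw [← Set.ncard_image_of_injOn hinj]
      exact Set.ncard_le_ncard himgsub (hB'fin.inter_of_left _)
    have e1 : T.ncard = B'.ncard - (B' ∩ x '' B').ncard := by
      rw [hTdef, show B' \ (x '' B') = B' \ (B' ∩ x '' B') by rw [Set.diff_self_inter],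
        Set.ncard_diff Set.inter_subset_left (hB'fin.inter_of_left _)]
    have e2 : (B' \ (LinearMap.ker x : Set V)).ncard
        = B'.ncard - (B' ∩ (LinearMap.ker x : Set V)).ncard := by
      rw [show B' \ (LinearMap.ker x : Set V) = B' \ (B' ∩ (LinearMap.ker x : Set V)) by
          rw [Set.diff_self_inter],
        Set.ncard_diff Set.inter_subset_left (hB'fin.inter_of_left _)]
    have hKxcard : (B' ∩ (LinearMap.ker x : Set V)).ncard ≤ C'.ncard := by
      have hind2 : LinearIndependent 𝕜 ((↑) : (B' ∩ (LinearMap.ker x : Set V) : Set V) → V) :=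
        linearIndependent_subtype_iff.mpr (LinearIndepOn.mono (linearIndependent_subtype_iff.mp hB'ind) Set.inter_subset_left)
      have hsp : span 𝕜 (B' ∩ (LinearMap.ker x : Set V)) ≤ LinearMap.ker x ⊓ W' := by
        refine span_le.mpr ?_
        rintro b ⟨hb, hk⟩
        exact Submodule.mem_inf.mpr ⟨hk, hB'sub hb⟩
      calc (B' ∩ (LinearMap.ker x : Set V)).ncard
          = finrank 𝕜 (span 𝕜 (B' ∩ (LinearMap.ker x : Set V))) := ncard_eq_finrank_span hind2
        _ ≤ finrank 𝕜 (LinearMap.ker x ⊓ W' : Submodule 𝕜 V) := Submodule.finrank_mono hsp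
        _ = finrank 𝕜 (span 𝕜 C') := by rw [hC'span]
        _ ≤ C'.ncard := finrank_span_le_ncard C' hC'fin
    have hintle1 : (B' ∩ x '' B').ncard ≤ B'.ncard :=
      Set.ncard_le_ncard Set.inter_subset_left hB'fin
    have hintle2 : (B' ∩ (LinearMap.ker x : Set V)).ncard ≤ B'.ncard :=
      Set.ncard_le_ncard Set.inter_subset_left hB'fin
    have hTle : T.ncard ≤ C'.ncard := by omega
    have hB'card : B'.ncard = finrank 𝕜 W' := by
      rw [ncard_eq_finrank_span hB'ind, hB'span]
    have hCcard : C.ncard = finrank 𝕜 K := by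
      rw [ncard_eq_finrank_span hCind, hCspan]
    have hC'le : C'.ncard ≤ C.ncard := Set.ncard_le_ncard hC'C hCfin
    have hCdiff : (C \ C').ncard = C.ncard - C'.ncard := Set.ncard_diff hC'C hC'fin
    have hScard : S.ncard ≤ T.ncard := Set.ncard_image_le hTfin
    have hBsub2 : B ⊆ (B' ∪ S) ∪ (C \ C') := by
      rintro v ((hv | hv) | hv)
      · exact Or.inl (Or.inl hv)
      · exact Or.inl (Or.inr hv)
      · by_cases hvC' : v ∈ C'
        · exact Or.inl (Or.inl (hC'B hvC'))
        · exact Or.inr ⟨hv, hvC'⟩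
    have hBcard : B.ncard ≤ finrank 𝕜 W := by
      have hh1 : B.ncard ≤ ((B' ∪ S) ∪ (C \ C')).ncard :=
        Set.ncard_le_ncard hBsub2 ((hB'fin.union hSfin).union hCfin.diff)
      have hh2 : ((B' ∪ S) ∪ (C \ C')).ncard ≤ (B' ∪ S).ncard + (C \ C').ncard :=
        Set.ncard_union_le _ _
      have hh3 : (B' ∪ S).ncard ≤ B'.ncard + S.ncard := Set.ncard_union_le _ _
      omega
    have hBind : LinearIndependent 𝕜 ((↑) : B → V) := by
      refine indep_of_span_of_card hBfin ?_
      rw [hBspan]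
      have := finrank_span_le_ncard (𝕜 := 𝕜) B hBfin
      rw [hBspan] at this
      exact hBcard
    exact ⟨B, hBsubW, hBind, hBspan, hBcol, hBstab, C, Set.subset_union_right, hCspan⟩

end ColoredJordanAux

/-- Every cyclically colored nilpotent endomorphism of a colored vector
space `V = V_0 ⊕ ⋯ ⊕ V_{n−1}` (colors in `ℤ/nℤ`, `x(V_i) ⊆ V_{i+1}`) admits a colored
Jordan basis: a basis of `V` of colored vectors, stable under `x` (each basis vector is
sent to a basis vector or to `0`), containing a basis of `ker x`. -/

theorem exists_colored_jordan_basis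
    {𝕜 V : Type*} [Field 𝕜] [AddCommGroup V] [Module 𝕜 V] [FiniteDimensional 𝕜 V]
    {n : ℕ} [NeZero n]
    (Vc : ZMod n → Submodule 𝕜 V) (hV : DirectSum.IsInternal Vc)
    (x : Module.End 𝕜 V)
    (hcol : ∀ i, Submodule.map x (Vc i) ≤ Vc (i + 1))
    (hnil : IsNilpotent x) :
    ∃ B : Set V,
      LinearIndependent 𝕜 ((↑) : B → V) ∧
      Submodule.span 𝕜 B = ⊤ ∧
      (∀ v ∈ B, ∃ i, v ∈ Vc i) ∧
      (∀ v ∈ B, x v ∈ B ∨ x v = 0) ∧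
      ∃ C ⊆ B, Submodule.span 𝕜 C = LinearMap.ker x := by
  classical
  set e : (⨁ i, Vc i) ≃ₗ[𝕜] V := LinearEquiv.ofBijective (DirectSum.coeLinearMap Vc) hV
    with hedef
  set π : ZMod n → Module.End 𝕜 V := fun i =>
    (Vc i).subtype ∘ₗ (DirectSum.component 𝕜 (ZMod n) (fun j => ↥(Vc j)) i)
      ∘ₗ (e.symm : V →ₗ[𝕜] ⨁ i, ↥(Vc i)) with hπdef
  have hπapp : ∀ i (v : V), π i v = ((e.symm v) i : V) := fun i v => rfl
  have hπmem : ∀ i (v : V), π i v ∈ Vc i := fun i v => by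
    rw [hπapp]; exact SetLike.coe_mem _
  have hπproj : ∀ i (v : V), v ∈ Vc i → π i v = v := fun i v hv => by
    rw [hπapp, hV.ofBijective_coeLinearMap_of_mem hv]
  have hπorth : ∀ i j (v : V), v ∈ Vc i → j ≠ i → π j v = 0 := fun i j v hv hij => by
    rw [hπapp, hV.ofBijective_coeLinearMap_of_mem_ne (Ne.symm hij) hv]
    rfl
  have hπsum : ∀ v : V, ∑ i, π i v = v := by
    intro v
    have h1 : (e.symm v : ⨁ i, ↥(Vc i)) = ∑ i, DirectSum.of _ i ((e.symm v) i) :=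
      (DirectSum.sum_univ_of _).symm
    calc ∑ i, π i v
        = ∑ i, (DirectSum.coeLinearMap Vc) (DirectSum.of _ i ((e.symm v) i)) := by
          refine Finset.sum_congr rfl fun i _ => ?_
          rw [DirectSum.coeLinearMap_of, hπapp]
      _ = DirectSum.coeLinearMap Vc (∑ i, DirectSum.of _ i ((e.symm v) i)) :=
          (map_sum _ _ _).symm
      _ = DirectSum.coeLinearMap Vc (e.symm v) := by rw [← h1]
      _ = v := e.apply_symm_apply v
  have hcomm : ∀ i (v : V), π (i + 1) (x v) = x (π i v) := by
    intro i v
    have h1 : x v = ∑ j, x (π j v) := by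
      conv_lhs => rw [← hπsum v]
      rw [map_sum]
    rw [h1, map_sum]
    rw [Finset.sum_eq_single i]
    · exact hπproj (i + 1) _ (hcol i ⟨π i v, hπmem i v, rfl⟩)
    · intro j _ hj
      exact hπorth (j + 1) (i + 1) _ (hcol j ⟨π j v, hπmem j v, rfl⟩)
        (fun h => hj (add_right_cancel h).symm)
    · intro h
      exact absurd (Finset.mem_univ i) h
  obtain ⟨B, _, hBind, hBspan, hBcol, hBstab, C, hCB, hCspan⟩ :=
    aux_main hπmem hπsum hπproj x hcomm hnil (finrank 𝕜 V) ⊤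
      (by rw [finrank_top]) le_top (fun v _ i => Submodule.mem_top)
  exact ⟨B, hBind, hBspan, hBcol, hBstab, C, hCB, by rw [hCspan, inf_top_eq]⟩
end

section
/- Let (λ, μ) be a marked partition and define μ̃_i = max({μ_j : j ≥ i} ∪ {λ_i − λ_j + μ_j : j < i} ∪ {0}). Then (λ, μ̃) is a bipartition with μ̃ ≥ μ, and it is minimal: any bipartition (λ, δ) with δ ≥ μ satisfies δ ≥ μ̃. -/
/-- For a marked partition `(λ, μ)`, define
`μ̃_i = max({μ_j : j ≥ i} ∪ {λ_i − λ_j + μ_j : j < i} ∪ {0})` (expressed via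
`IsGreatest`).  Then `(λ, μ̃)` is a bipartition with `μ̃ ≥ μ`, and it is minimal:
any bipartition `(λ, δ)` with `δ ≥ μ` satisfies `δ ≥ μ̃`. -/
theorem minimal_bipartition
    (lam : ℕ → ℕ) (hlam : Antitone lam) (hfin : ∃ N, ∀ i ≥ N, lam i = 0)
    (mu : ℕ → ℤ) (hmu : ∀ i, mu i ≤ (lam i : ℤ))
    (muT : ℕ → ℤ)
    (hmuT : ∀ i, IsGreatest
      ({z : ℤ | ∃ j ≥ i, z = mu j} ∪
       {z : ℤ | ∃ j < i, z = (lam i : ℤ) - (lam j : ℤ) + mu j} ∪ {0}) (muT i)) :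
    (∀ i, muT i ≤ (lam i : ℤ)) ∧
    (∀ i, 0 ≤ muT i) ∧
    Antitone muT ∧
    (∀ i j, i ≤ j → (lam j : ℤ) - muT j ≤ (lam i : ℤ) - muT i) ∧
    (∀ i, mu i ≤ muT i) ∧
    (∀ delta : ℕ → ℤ, (∀ i, delta i ≤ (lam i : ℤ)) → (∀ i, 0 ≤ delta i) →
      Antitone delta →
      (∀ i j, i ≤ j → (lam j : ℤ) - delta j ≤ (lam i : ℤ) - delta i) →
      (∀ i, mu i ≤ delta i) → ∀ i, muT i ≤ delta i) := by
  -- membership case analysis for muT i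
  have hmem : ∀ i, (∃ j ≥ i, muT i = mu j) ∨
      (∃ j < i, muT i = (lam i : ℤ) - (lam j : ℤ) + mu j) ∨ muT i = 0 := by
    intro i
    rcases (hmuT i).1 with (h | h) | h
    · exact Or.inl h
    · exact Or.inr (Or.inl h)
    · exact Or.inr (Or.inr h)
  have hub : ∀ i z, z ∈ ({z : ℤ | ∃ j ≥ i, z = mu j} ∪
       {z : ℤ | ∃ j < i, z = (lam i : ℤ) - (lam j : ℤ) + mu j} ∪ {0}) → z ≤ muT i :=
    fun i z hz => (hmuT i).2 hz
  have hzero : ∀ i, (0 : ℤ) ≤ muT i := fun i =>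
    hub i 0 (Or.inr rfl)
  have hge : ∀ i, mu i ≤ muT i := fun i =>
    hub i (mu i) (Or.inl (Or.inl ⟨i, le_refl i, rfl⟩))
  have hle : ∀ i, muT i ≤ (lam i : ℤ) := by
    intro i
    rcases hmem i with ⟨j, hj, h⟩ | ⟨j, hj, h⟩ | h
    · calc muT i = mu j := h
        _ ≤ (lam j : ℤ) := hmu j
        _ ≤ (lam i : ℤ) := by exact_mod_cast hlam hj
    · have := hmu j
      omega
    · have : (0:ℤ) ≤ lam i := Int.natCast_nonneg _
      omega
  have hanti : Antitone muT := by
    intro i i' hii'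
    rcases hmem i' with ⟨j, hj, h⟩ | ⟨j, hj, h⟩ | h
    · exact h ▸ hub i (mu j) (Or.inl (Or.inl ⟨j, le_trans hii' hj, rfl⟩))
    · by_cases hji : j < i
      · have h1 : (lam i' : ℤ) - lam j + mu j ≤ (lam i : ℤ) - lam j + mu j := by
          have : (lam i' : ℤ) ≤ lam i := by exact_mod_cast hlam hii'
          omega
        exact h ▸ le_trans h1 (hub i _ (Or.inl (Or.inr ⟨j, hji, rfl⟩)))
      · push_neg at hji
        have h1 : (lam i' : ℤ) - lam j + mu j ≤ mu j := by
          have : (lam i' : ℤ) ≤ lam j := by exact_mod_cast hlam (le_of_lt hj)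
          omega
        exact h ▸ le_trans h1 (hub i _ (Or.inl (Or.inl ⟨j, hji, rfl⟩)))
    · exact h ▸ hzero i
  have hdiff : ∀ i j, i ≤ j → (lam j : ℤ) - muT j ≤ (lam i : ℤ) - muT i := by
    intro i j hij
    rcases hmem i with ⟨k, hk, h⟩ | ⟨k, hk, h⟩ | h
    · by_cases hkj : j ≤ k
      · have h1 : mu k ≤ muT j := hub j (mu k) (Or.inl (Or.inl ⟨k, hkj, rfl⟩))
        have h2 : (lam j : ℤ) ≤ lam i := by exact_mod_cast hlam hij
        omega
      · push_neg at hkj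
        have h1 : (lam j : ℤ) - lam k + mu k ≤ muT j :=
          hub j _ (Or.inl (Or.inr ⟨k, hkj, rfl⟩))
        have h2 : (lam k : ℤ) ≤ lam i := by exact_mod_cast hlam hk
        omega
    · have h1 : (lam j : ℤ) - lam k + mu k ≤ muT j :=
        hub j _ (Or.inl (Or.inr ⟨k, lt_of_lt_of_le hk hij, rfl⟩))
      omega
    · have h1 : (0:ℤ) ≤ muT j := hzero j
      have h2 : (lam j : ℤ) ≤ lam i := by exact_mod_cast hlam hij
      omega
  refine ⟨hle, hzero, hanti, hdiff, hge, ?_⟩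
  intro delta hd1 hd2 hd3 hd4 hd5 i
  rcases hmem i with ⟨j, hj, h⟩ | ⟨j, hj, h⟩ | h
  · exact h ▸ le_trans (hd5 j) (hd3 hj)
  · have h1 := hd4 j i (le_of_lt hj)
    have h2 := hd5 j
    omega
  · exact h ▸ hd2 i
end

section
/- A marked partition (λ, μ) is a k-quasi-bipartition if and only if its minimal bipartition (λ, μ̃) satisfies 0 ≤ μ̃_i − μ_i < k for every i. -/
/-- A marked partition `(λ, μ)` is a `k`-quasi-bipartition iff its
minimal bipartition marking `μ̃` (expressed via `IsGreatest`) satisfies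
`0 ≤ μ̃_i − μ_i < k` for every `i`. -/
theorem quasi_bipartition_iff
    (k : ℕ) (hk : 0 < k)
    (lam : ℕ → ℕ) (hlam : Antitone lam) (hfin : ∃ N, ∀ i ≥ N, lam i = 0)
    (mu : ℕ → ℤ) (hmu : ∀ i, mu i ≤ (lam i : ℤ))
    (muT : ℕ → ℤ)
    (hmuT : ∀ i, IsGreatest
      ({z : ℤ | ∃ j ≥ i, z = mu j} ∪
       {z : ℤ | ∃ j < i, z = (lam i : ℤ) - (lam j : ℤ) + mu j} ∪ {0}) (muT i)) :
    ((∀ i, -(k : ℤ) < mu i) ∧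
      (∀ i j, i < j → mu j < mu i + k ∧
        (lam j : ℤ) - mu j < (lam i : ℤ) - mu i + k)) ↔
    (∀ i, 0 ≤ muT i - mu i ∧ muT i - mu i < k) := by
  have hmem : ∀ i z, z ∈ ({z : ℤ | ∃ j ≥ i, z = mu j} ∪
       {z : ℤ | ∃ j < i, z = (lam i : ℤ) - (lam j : ℤ) + mu j} ∪ {0}) → z ≤ muT i :=
    fun i z hz => (hmuT i).2 hz
  constructor
  · rintro ⟨h1, h2⟩ i
    refine ⟨by linarith [hmem i (mu i) (Or.inl (Or.inl ⟨i, le_refl i, rfl⟩))], ?_⟩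
    have := (hmuT i).1
    rcases this with ((⟨j, hj, hje⟩ | ⟨j, hj, hje⟩) | h0)
    · rcases eq_or_lt_of_le hj with rfl | hj'
      · simp [hje]; exact_mod_cast hk
      · have := (h2 i j hj').1
        linarith [hje ▸ this]
    · have := (h2 j i hj).2
      rw [hje]; linarith
    · simp only [Set.mem_singleton_iff] at h0
      have := h1 i
      rw [h0]; linarith
  · intro h
    have key : ∀ i, mu i ≤ muT i ∧ muT i < mu i + k := by
      intro i; obtain ⟨a, b⟩ := h i; exact ⟨by linarith, by linarith⟩
    constructor
    · intro i
      have h0 : (0 : ℤ) ≤ muT i := hmem i 0 (Or.inr rfl)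
      linarith [(key i).2]
    · intro i j hij
      constructor
      · have := hmem i (mu j) (Or.inl (Or.inl ⟨j, le_of_lt hij, rfl⟩))
        linarith [(key i).2]
      · have := hmem j ((lam j : ℤ) - (lam i : ℤ) + mu i) (Or.inl (Or.inr ⟨i, hij, rfl⟩))
        linarith [(key j).2]
end

section
/- For a nilpotent endomorphism x of a finite-dimensional vector space V with Jordan type λ (a partition of dim V), the centralizer E^x = {y ∈ End(V) : xy = yx} has dimension dim V + 2·Σ_{i≥1}(i−1)λ_i = Σ_{k=1}^{l(λ)} dim ker(x^{λ_k}). -/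
open Module Submodule
open Polynomial

set_option maxHeartbeats 1600000
set_option synthInstance.maxHeartbeats 1000000

universe u v

section Aux

variable {𝕜 : Type u} [Field 𝕜]

/-- identity as k-linear equiv between the module quotient and AdjoinRoot -/
noncomputable def quotAdjoinEquiv (f : 𝕜[X]) :
    (𝕜[X] ⧸ (span 𝕜[X] {f} : Submodule 𝕜[X] 𝕜[X])) ≃ₗ[𝕜] AdjoinRoot f where
  toFun := id
  invFun := id
  left_inv _ := rfl
  right_inv _ := rfl
  map_add' _ _ := rfl
  map_smul' _ _ := rfl

theorem finrank_quot_span_X_pow (c : ℕ) :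
    finrank 𝕜 (𝕜[X] ⧸ (span 𝕜[X] {(X:𝕜[X])^c} : Submodule 𝕜[X] 𝕜[X])) = c := by
  rw [(quotAdjoinEquiv ((X:𝕜[X])^c)).finrank_eq,
    (AdjoinRoot.powerBasis' (monic_X_pow (R := 𝕜) c)).finrank, AdjoinRoot.powerBasis'_dim,
    natDegree_X_pow]

instance fdQuot (c : ℕ) :
    FiniteDimensional 𝕜 (𝕜[X] ⧸ (span 𝕜[X] {(X:𝕜[X])^c} : Submodule 𝕜[X] 𝕜[X])) := by
  have : FiniteDimensional 𝕜 (AdjoinRoot ((X:𝕜[X])^c)) :=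
    Module.Finite.of_basis (AdjoinRoot.powerBasis' (monic_X_pow (R := 𝕜) c)).basis
  exact Module.Finite.equiv (quotAdjoinEquiv _).symm

theorem span_X_pow_sup (a t : ℕ) :
    (span 𝕜[X] {(X:𝕜[X])^a} : Submodule 𝕜[X] 𝕜[X]) ⊔ span 𝕜[X] {(X:𝕜[X])^t}
      = span 𝕜[X] {(X:𝕜[X])^(min a t)} := by
  rcases le_total a t with h | h
  · rw [min_eq_left h, sup_eq_left.mpr]
    rw [span_le, Set.singleton_subset_iff, SetLike.mem_coe, mem_span_singleton]
    exact ⟨X^(t-a), by rw [smul_eq_mul, ← pow_add]; congr 1; omega⟩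
  · rw [min_eq_right h, sup_eq_right.mpr]
    rw [span_le, Set.singleton_subset_iff, SetLike.mem_coe, mem_span_singleton]
    exact ⟨X^(a-t), by rw [smul_eq_mul, ← pow_add]; congr 1; omega⟩

section HomQuot
variable {M : Type*} [AddCommGroup M] [Module 𝕜[X] M] [Module 𝕜 M] [IsScalarTower 𝕜 𝕜[X] M]

/-- `Hom(R/(r), M) ≃ torsionBy M r` as `𝕜`-modules. -/
noncomputable def homQuotEquiv (r : 𝕜[X]) :
    ((𝕜[X] ⧸ (span 𝕜[X] {r} : Submodule 𝕜[X] 𝕜[X])) →ₗ[𝕜[X]] M) ≃ₗ[𝕜] torsionBy 𝕜[X] M r where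
  toFun φ := ⟨φ (Submodule.Quotient.mk 1), by
    rw [mem_torsionBy_iff, ← map_smul, ← Submodule.Quotient.mk_smul, smul_eq_mul, mul_one,
      (Submodule.Quotient.mk_eq_zero _).mpr (mem_span_singleton_self r), map_zero]⟩
  invFun m := liftQSpanSingleton r (LinearMap.toSpanSingleton 𝕜[X] M m) (by
      simpa using m.2)
  left_inv φ := by
    refine Submodule.linearMap_qext _ (LinearMap.ext fun p => ?_)
    simp only [LinearMap.comp_apply, mkQ_apply]
    rw [liftQSpanSingleton_apply, LinearMap.toSpanSingleton_apply, ← map_smul,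
      ← Submodule.Quotient.mk_smul, smul_eq_mul, mul_one]
  right_inv m := by
    ext
    show liftQSpanSingleton r _ _ (Submodule.Quotient.mk 1) = _
    rw [liftQSpanSingleton_apply, LinearMap.toSpanSingleton_apply, one_smul]
  map_add' φ ψ := rfl
  map_smul' c φ := rfl
end HomQuot

section TorsionKer
variable {V : Type*} [AddCommGroup V] [Module 𝕜 V] (x : Module.End 𝕜 V)

/-- torsion by `X^t` in `AEval' x` is the kernel of `x^t`. -/
noncomputable def torsionKerEquiv (t : ℕ) :
    torsionBy 𝕜[X] (Module.AEval' x) ((X : 𝕜[X])^t) ≃ₗ[𝕜] LinearMap.ker (x ^ t) where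
  toFun m := ⟨(Module.AEval'.of x).symm m.1, by
    have h1 := m.2
    rw [mem_torsionBy_iff] at h1
    have h2 := Module.AEval.of_symm_smul (R := 𝕜) (M := V) x ((X:𝕜[X])^t) m.1
    rw [h1, map_zero, map_pow, aeval_X] at h2
    rw [LinearMap.mem_ker]
    rw [Module.End.smul_def] at h2
    exact h2.symm⟩
  invFun v := ⟨Module.AEval'.of x v.1, by
    rw [mem_torsionBy_iff, ← Module.AEval.of_aeval_smul, map_pow, aeval_X, Module.End.smul_def]
    have : (x^t) (v : V) = 0 := v.2
    rw [this, map_zero]⟩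
  left_inv m := by ext; simp
  right_inv v := by ext; simp
  map_add' _ _ := by ext; simp
  map_smul' _ _ := by ext; simp
end TorsionKer

section Centralizer
variable {V : Type*} [AddCommGroup V] [Module 𝕜 V] (x : Module.End 𝕜 V)

noncomputable def centralizerEquiv :
    ↥(Subalgebra.centralizer 𝕜 ({x} : Set (Module.End 𝕜 V))) ≃ₗ[𝕜]
      (Module.AEval' x →ₗ[𝕜[X]] Module.AEval' x) where
  toFun y := LinearMap.ofAEval x ((Module.AEval'.of x).toLinearMap ∘ₗ (y : Module.End 𝕜 V)) (by
    intro m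
    have hc := (Subalgebra.mem_centralizer_iff 𝕜).mp y.2 x rfl
    simp only [LinearMap.comp_apply, LinearEquiv.coe_coe]
    rw [Module.AEval'.X_smul_of, Module.End.smul_def]
    have h2 := LinearMap.congr_fun hc m
    simp only [Module.End.mul_apply] at h2
    exact congrArg _ h2.symm)
  invFun φ := ⟨(Module.AEval'.of x).symm.toLinearMap ∘ₗ
      (φ.restrictScalars 𝕜) ∘ₗ (Module.AEval'.of x).toLinearMap, by
    rw [Subalgebra.mem_centralizer_iff]
    intro g hg
    obtain rfl : g = x := hg
    refine LinearMap.ext fun v => ?_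
    simp only [Module.End.mul_apply, LinearMap.comp_apply, LinearEquiv.coe_coe,
      LinearMap.coe_restrictScalars]
    rw [← Module.AEval'.of_symm_X_smul, ← map_smul, Module.AEval'.X_smul_of]⟩
  left_inv y := by
    ext v
    rfl
  right_inv φ := by
    refine LinearMap.ext fun m => ?_
    rfl
  map_add' y z := by refine LinearMap.ext fun m => ?_; rfl
  map_smul' c y := by refine LinearMap.ext fun m => ?_; rfl
end Centralizer

theorem finrank_torsionBy_quot (a t : ℕ) :
    finrank 𝕜 ↥(torsionBy 𝕜[X] (𝕜[X] ⧸ (span 𝕜[X] {(X:𝕜[X])^a} : Submodule 𝕜[X] 𝕜[X]))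
        ((X:𝕜[X])^t)) = min a t := by
  set Q := 𝕜[X] ⧸ (span 𝕜[X] {(X:𝕜[X])^a} : Submodule 𝕜[X] 𝕜[X]) with hQ
  set μR : Q →ₗ[𝕜[X]] Q := LinearMap.lsmul 𝕜[X] Q ((X:𝕜[X])^t) with hmu
  set μ : Q →ₗ[𝕜] Q := μR.restrictScalars 𝕜 with hmuk
  -- torsion = ker μ
  have e1 : ↥(torsionBy 𝕜[X] Q ((X:𝕜[X])^t)) ≃ₗ[𝕜] ↥(LinearMap.ker μ) :=
    { toFun := fun m => ⟨m.1, by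
        have := m.2; rw [mem_torsionBy_iff] at this
        simpa [hmuk, hmu] using this⟩
      invFun := fun m => ⟨m.1, by
        have := m.2
        simp only [LinearMap.mem_ker, hmuk, hmu, LinearMap.coe_restrictScalars,
          LinearMap.lsmul_apply] at this
        rw [mem_torsionBy_iff]; exact this⟩
      left_inv := fun _ => rfl
      right_inv := fun _ => rfl
      map_add' := fun _ _ => rfl
      map_smul' := fun _ _ => rfl }
  -- range μR as map of span
  have hrange : LinearMap.range μR
      = Submodule.map (span 𝕜[X] {(X:𝕜[X])^a}).mkQ
          ((span 𝕜[X] {(X:𝕜[X])^a} : Submodule 𝕜[X] 𝕜[X]) ⊔ span 𝕜[X] {(X:𝕜[X])^t}) := by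
    rw [Submodule.map_sup]
    have h1 : Submodule.map (span 𝕜[X] {(X:𝕜[X])^a}).mkQ (span 𝕜[X] {(X:𝕜[X])^a}) = ⊥ := by
      rw [← le_bot_iff, Submodule.map_le_iff_le_comap]
      exact le_of_eq (Submodule.ker_mkQ _).symm
    rw [h1, bot_sup_eq]
    apply le_antisymm
    · rintro _ ⟨q, rfl⟩
      obtain ⟨p, rfl⟩ := Submodule.mkQ_surjective _ q
      refine ⟨X^t * p, mem_span_singleton.mpr ⟨p, by rw [smul_eq_mul, mul_comm]⟩, ?_⟩
      show Submodule.Quotient.mk (X^t * p) = μR (Submodule.Quotient.mk p)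
      simp only [hmu, LinearMap.lsmul_apply, Submodule.mkQ_apply]
      rw [← Submodule.Quotient.mk_smul, smul_eq_mul]
    · rintro _ ⟨p, hp, rfl⟩
      obtain ⟨c, rfl⟩ := mem_span_singleton.mp hp
      refine ⟨Submodule.Quotient.mk c, ?_⟩
      show μR (Submodule.Quotient.mk c) = Submodule.Quotient.mk (c • (X:𝕜[X])^t)
      simp only [hmu, LinearMap.lsmul_apply, Submodule.mkQ_apply]
      rw [← Submodule.Quotient.mk_smul, smul_eq_mul, smul_eq_mul, mul_comm]
  -- quotient equiv
  have e2 : (Q ⧸ LinearMap.range μR) ≃ₗ[𝕜[X]]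
      (𝕜[X] ⧸ (span 𝕜[X] {(X:𝕜[X])^(min a t)} : Submodule 𝕜[X] 𝕜[X])) := by
    rw [hrange]
    exact (Submodule.quotientQuotientEquivQuotient _ _ le_sup_left).trans
      (Submodule.quotEquivOfEq _ _ (span_X_pow_sup a t))
  -- dimension count
  have hk : finrank 𝕜 ↥(LinearMap.ker μ) = finrank 𝕜 (Q ⧸ LinearMap.range μ) := by
    have h1 := LinearMap.finrank_range_add_finrank_ker μ
    have h2 := Submodule.finrank_quotient_add_finrank (LinearMap.range μ)
    omega
  have hrr : LinearMap.range μ = Submodule.restrictScalars 𝕜 (LinearMap.range μR) := by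
    ext q
    simp [hmuk]
  have e3 : (Q ⧸ LinearMap.range μ) ≃ₗ[𝕜] (Q ⧸ LinearMap.range μR) := by
    rw [hrr]
    exact Submodule.Quotient.restrictScalarsEquiv 𝕜 (LinearMap.range μR)
  rw [e1.finrank_eq, hk, e3.finrank_eq, (e2.restrictScalars 𝕜).finrank_eq,
    finrank_quot_span_X_pow]

/-- hom into a finite product -/
def homPiEquiv {R S A : Type*} {ι : Type*} (M : ι → Type*) [Semiring R] [Semiring S]
    [AddCommMonoid A] [Module R A] [∀ i, AddCommMonoid (M i)] [∀ i, Module R (M i)]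
    [∀ i, Module S (M i)] [∀ i, SMulCommClass R S (M i)] :
    (A →ₗ[R] ((i : ι) → M i)) ≃ₗ[S] ((i : ι) → (A →ₗ[R] M i)) where
  toFun f i := (LinearMap.proj i).comp f
  invFun g := LinearMap.pi g
  left_inv f := by ext a i; rfl
  right_inv g := by ext i a; rfl
  map_add' f g := by ext i a; rfl
  map_smul' c f := by ext i a; rfl

variable {V : Type v} [AddCommGroup V] [Module 𝕜 V] [FiniteDimensional 𝕜 V]

theorem master (x : Module.End 𝕜 V) (hx : IsNilpotent x) :
    ∃ (d : ℕ) (k : Fin d → ℕ),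
      (∀ t : ℕ, finrank 𝕜 ↥(LinearMap.ker (x ^ t)) = ∑ i, min (k i) t) ∧
      finrank 𝕜 ↥(Subalgebra.centralizer 𝕜 ({x} : Set (Module.End 𝕜 V)))
        = ∑ i, finrank 𝕜 ↥(LinearMap.ker (x ^ (k i))) := by
  classical
  have hN : Module.IsTorsion' (Module.AEval' x) (Submonoid.powers (X : 𝕜[X])) := by
    obtain ⟨n, hn⟩ := hx
    intro m
    refine ⟨⟨X^n, n, rfl⟩, ?_⟩
    show (X:𝕜[X])^n • m = 0
    have h2 := Module.AEval.of_symm_smul (R := 𝕜) (M := V) x ((X:𝕜[X])^n) m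
    rw [map_pow, aeval_X, Module.End.smul_def, hn] at h2
    simpa using ((Module.AEval'.of x).symm.map_eq_zero_iff).mp (by simpa using h2)
  let uE : ULift.{u} (Module.AEval' x) ≃ₗ[𝕜[X]] Module.AEval' x := ULift.moduleEquiv
  have hN' : Module.IsTorsion' (ULift.{u} (Module.AEval' x))
      (Submonoid.powers (X : 𝕜[X])) := by
    intro m
    obtain ⟨s, hs⟩ := @hN (uE m)
    exact ⟨s, uE.injective (by
      rw [Submonoid.smul_def, map_smul, ← Submonoid.smul_def, hs, map_zero])⟩
  haveI : Module.Finite 𝕜[X] (ULift.{u} (Module.AEval' x)) := Module.Finite.equiv uE.symm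
  obtain ⟨d, k, ⟨e'⟩⟩ :=
    Module.torsion_by_prime_power_decomposition (Polynomial.irreducible_X (R := 𝕜)) hN'
  let e : Module.AEval' x ≃ₗ[𝕜[X]] _ := uE.symm.trans e'
  -- notation
  set Q : Fin d → Type _ := fun i => 𝕜[X] ⧸ (span 𝕜[X] {(X:𝕜[X])^(k i)} : Submodule 𝕜[X] 𝕜[X])
    with hQdef
  -- the pi version of the target
  let eπ : Module.AEval' x ≃ₗ[𝕜[X]] ((i : Fin d) → Q i) :=
    e.trans (DirectSum.linearEquivFunOnFintype 𝕜[X] (Fin d) Q)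
  -- finite dimensionality of Hom spaces
  have fdHomQ : ∀ (r : 𝕜[X]) (i : Fin d), FiniteDimensional 𝕜
      ((𝕜[X] ⧸ (span 𝕜[X] {r} : Submodule 𝕜[X] 𝕜[X])) →ₗ[𝕜[X]] Q i) := by
    intro r i
    have : FiniteDimensional 𝕜 ↥(torsionBy 𝕜[X] (Q i) r) :=
      FiniteDimensional.of_injective
        (((torsionBy 𝕜[X] (Q i) r).subtype).restrictScalars 𝕜) (Subtype.coe_injective)
    exact Module.Finite.equiv (homQuotEquiv r).symm
  constructor
  constructor
  case h.w => exact k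
  constructor
  · -- kernels
    intro t
    have e1 : ↥(LinearMap.ker (x ^ t)) ≃ₗ[𝕜]
        ((i : Fin d) → ((𝕜[X] ⧸ (span 𝕜[X] {(X:𝕜[X])^t} : Submodule 𝕜[X] 𝕜[X])) →ₗ[𝕜[X]] Q i)) :=
      (torsionKerEquiv x t).symm.trans <| (homQuotEquiv ((X:𝕜[X])^t)).symm.trans <|
        ((LinearEquiv.arrowCongr (LinearEquiv.refl 𝕜[X] _) eπ).restrictScalars 𝕜).trans
          (homPiEquiv Q)
    haveI := fun i => fdHomQ ((X:𝕜[X])^t) i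
    haveI : ∀ i, Module.Free 𝕜 ((𝕜[X] ⧸ (span 𝕜[X] {(X:𝕜[X])^t} : Submodule 𝕜[X] 𝕜[X])) →ₗ[𝕜[X]] Q i) :=
      fun i => by
        show Module.Free 𝕜 ((𝕜[X] ⧸ (span 𝕜[X] {(X:𝕜[X])^t} : Submodule 𝕜[X] 𝕜[X])) →ₗ[𝕜[X]]
          (𝕜[X] ⧸ (span 𝕜[X] {(X:𝕜[X])^(k i)} : Submodule 𝕜[X] 𝕜[X])))
        exact Module.Free.of_divisionRing 𝕜 _
    rw [e1.finrank_eq, Module.finrank_pi_fintype 𝕜]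
    refine Finset.sum_congr rfl fun i _ => ?_
    rw [(homQuotEquiv ((X:𝕜[X])^t)).finrank_eq]
    exact finrank_torsionBy_quot (k i) t
  · -- centralizer
    have e2 : ↥(Subalgebra.centralizer 𝕜 ({x} : Set (Module.End 𝕜 V))) ≃ₗ[𝕜]
        ((i : Fin d) → ((𝕜[X] ⧸ (span 𝕜[X] {(X:𝕜[X])^(k i)} : Submodule 𝕜[X] 𝕜[X]))
          →ₗ[𝕜[X]] Module.AEval' x)) :=
      (centralizerEquiv x).trans <|
        ((LinearEquiv.arrowCongr eπ (LinearEquiv.refl 𝕜[X] _)).restrictScalars 𝕜).trans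
          (LinearMap.lsum 𝕜[X] Q 𝕜).symm
    have fdHomN : ∀ i : Fin d, FiniteDimensional 𝕜
        ((𝕜[X] ⧸ (span 𝕜[X] {(X:𝕜[X])^(k i)} : Submodule 𝕜[X] 𝕜[X])) →ₗ[𝕜[X]] Module.AEval' x) := by
      intro i
      exact Module.Finite.equiv ((homQuotEquiv _).trans (torsionKerEquiv x (k i))).symm
    haveI := fdHomN
    rw [e2.finrank_eq, Module.finrank_pi_fintype 𝕜]
    refine Finset.sum_congr rfl fun i _ => ?_
    rw [((homQuotEquiv _).trans (torsionKerEquiv x (k i))).finrank_eq]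

end Aux

/-- counting step -/
theorem min_sum_succ (u : Multiset ℕ) (n : ℕ) :
    (u.map (fun a => min a (n+1))).sum
      = (u.map (fun a => min a n)).sum + (u.filter (fun a => n+1 ≤ a)).card := by
  induction u using Multiset.induction with
  | empty => simp
  | cons a u ih =>
    simp only [Multiset.map_cons, Multiset.sum_cons, Multiset.filter_cons, ih]
    by_cases hle : n+1 ≤ a
    · rw [if_pos hle, min_eq_right hle, min_eq_right (by omega : n ≤ a)]
      simp only [Multiset.card_add, Multiset.card_singleton]
      omega
    · rw [if_neg hle, min_eq_left (by omega : a ≤ n+1), min_eq_left (by omega : a ≤ n)]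
      simp only [Multiset.card_add, Multiset.card_zero]
      omega

theorem filter_card_split (u : Multiset ℕ) (m : ℕ) :
    (u.filter (fun a => m ≤ a)).card = u.count m + (u.filter (fun a => m+1 ≤ a)).card := by
  induction u using Multiset.induction with
  | empty => simp
  | cons a u ih =>
    simp only [Multiset.filter_cons, ih]
    by_cases h1 : a = m
    · subst h1
      rw [if_pos (le_refl a), if_neg (by omega : ¬ a+1 ≤ a), Multiset.count_cons_self]
      simp only [Multiset.card_add, Multiset.card_singleton, Multiset.card_zero]
      omega
    · rw [Multiset.count_cons_of_ne (by omega : m ≠ a)]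
      by_cases h2 : m ≤ a
      · rw [if_pos h2, if_pos (by omega : m+1 ≤ a)]
        simp only [Multiset.card_add, Multiset.card_singleton]
        omega
      · rw [if_neg h2, if_neg (by omega : ¬ m+1 ≤ a), zero_add, zero_add, ih]

theorem multiset_eq_of_min_sums {s t : Multiset ℕ} (hs : ∀ a ∈ s, 0 < a) (ht : ∀ a ∈ t, 0 < a)
    (h : ∀ n, (s.map (fun a => min a n)).sum = (t.map (fun a => min a n)).sum) : s = t := by
  have hcf : ∀ n, (s.filter (fun a => n+1 ≤ a)).card = (t.filter (fun a => n+1 ≤ a)).card := by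
    intro n
    have h1 := min_sum_succ s n; have h2 := min_sum_succ t n
    have h3 := h n; have h4 := h (n+1)
    omega
  refine Multiset.ext.mpr fun m => ?_
  match m with
  | 0 =>
    rw [Multiset.count_eq_zero.mpr (fun hmem => absurd (hs 0 hmem) (by omega)),
      Multiset.count_eq_zero.mpr (fun hmem => absurd (ht 0 hmem) (by omega))]
  | Nat.succ m =>
    show Multiset.count (m+1) s = Multiset.count (m+1) t
    have h1 := filter_card_split s (m+1); have h2 := filter_card_split t (m+1)
    have h3 := hcf m; have h4 := hcf (m+1)
    omega

theorem support_eq_range {lam : ℕ →₀ ℕ} (hlam : Antitone ⇑lam) :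
    lam.support = Finset.range lam.support.card := by
  have hdown : ∀ i j : ℕ, i ≤ j → j ∈ lam.support → i ∈ lam.support := by
    intro i j hij hj
    rw [Finsupp.mem_support_iff] at hj ⊢
    intro h0
    exact hj (Nat.le_zero.mp (h0 ▸ hlam hij))
  have hsub : lam.support ⊆ Finset.range lam.support.card := by
    intro m hm
    rw [Finset.mem_range]
    have : Finset.range (m+1) ⊆ lam.support := fun i hi =>
      hdown i m (by simpa using Nat.lt_succ_iff.mp (Finset.mem_range.mp hi)) hm
    have := Finset.card_le_card this
    rw [Finset.card_range] at this
    omega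
  exact Finset.eq_of_subset_of_card_le hsub (by rw [Finset.card_range])

theorem sum_map_filter_pos (u : Multiset ℕ) (f : ℕ → ℕ) (hf : f 0 = 0) :
    ((u.filter (fun a => 0 < a)).map f).sum = (u.map f).sum := by
  conv_rhs => rw [← Multiset.filter_add_not (fun a => 0 < a) u]
  rw [Multiset.map_add, Multiset.sum_add]
  have h0 : ((u.filter (fun a => ¬ 0 < a)).map f).sum = 0 := by
    refine Multiset.sum_eq_zero ?_
    intro z hz
    obtain ⟨a, ha, rfl⟩ := Multiset.mem_map.mp hz
    have h1 := (Multiset.mem_filter.mp ha).2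
    have h2 : a = 0 := by omega
    rw [h2, hf]
  rw [h0, add_zero]


/-- For a nilpotent endomorphism `x` of a finite-dimensional vector
space `V` with Jordan type `λ` (encoded as an antitone finitely-supported function,
characterized by `dim ker x^k = Σ_i min(λ_i, k)`), the centralizer
`E^x = {y : xy = yx}` has dimension
`dim V + 2 Σ_{i≥1} (i−1) λ_i = Σ_{k=1}^{l(λ)} dim ker(x^{λ_k})`.
(Rows are indexed from `0`, so `(i−1)λ_i` becomes `i * λ_i`.) -/
theorem centralizer_dimension
    {𝕜 V : Type*} [Field 𝕜] [AddCommGroup V] [Module 𝕜 V] [FiniteDimensional 𝕜 V]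
    (x : Module.End 𝕜 V) (hx : IsNilpotent x)
    (lam : ℕ →₀ ℕ) (hlam : Antitone ⇑lam)
    (hker : ∀ k : ℕ, finrank 𝕜 ↥(LinearMap.ker (x ^ k))
        = lam.sum fun _ m => min m k) :
    finrank 𝕜 ↥(Subalgebra.centralizer 𝕜 ({x} : Set (Module.End 𝕜 V)))
        = finrank 𝕜 V + 2 * (lam.sum fun i m => i * m) ∧
    finrank 𝕜 ↥(Subalgebra.centralizer 𝕜 ({x} : Set (Module.End 𝕜 V)))
        = ∑ k ∈ Finset.range lam.support.card,
            finrank 𝕜 ↥(LinearMap.ker (x ^ lam k)) := by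
  classical
  obtain ⟨d, k, hka, hkb⟩ := master x hx
  set ℓ := lam.support.card with hl
  have hsupp := support_eq_range hlam
  set D : ℕ → ℕ := fun t => finrank 𝕜 ↥(LinearMap.ker (x ^ t)) with hD
  have hD0 : D 0 = 0 := by
    rw [hD]; simp only [hker 0]
    simp [Finsupp.sum]
  -- Finsupp sums as multiset sums
  have hfs : ∀ g : ℕ → ℕ, (lam.sum fun _ m => g m)
      = ((lam.support.val.map lam).map g).sum := by
    intro g
    rw [Finsupp.sum, Finset.sum, Multiset.map_map]
    rfl
  -- the two multisets
  set s : Multiset ℕ := (Finset.univ.val.map k).filter (fun a => 0 < a) with hs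
  set tm : Multiset ℕ := lam.support.val.map lam with htm
  have hst : s = tm := by
    refine multiset_eq_of_min_sums ?_ ?_ ?_
    · intro a ha; exact (Multiset.mem_filter.mp ha).2
    · intro a ha
      obtain ⟨i, hi, rfl⟩ := Multiset.mem_map.mp ha
      exact Nat.pos_of_ne_zero (Finsupp.mem_support_iff.mp (by exact hi))
    · intro n
      rw [hs, sum_map_filter_pos _ _ (by simp), Multiset.map_map]
      have h1 : (Multiset.map ((fun a => min a n) ∘ k) Finset.univ.val).sum
          = ∑ i : Fin d, min (k i) n := rfl
      have h2 : (Multiset.map (fun a => min a n) tm).sum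
          = ∑ j ∈ lam.support, min (lam j) n := by
        rw [htm, Multiset.map_map]; rfl
      rw [h1, ← hka n, hker n, h2, Finsupp.sum]
  -- sum transport: for any f with f 0 = 0
  have hsum : ∀ f : ℕ → ℕ, f 0 = 0 →
      (∑ i : Fin d, f (k i)) = ∑ j ∈ Finset.range ℓ, f (lam j) := by
    intro f hf
    have h1 : (∑ i : Fin d, f (k i)) = ((Finset.univ.val.map k).map f).sum := by
      rw [Multiset.map_map]; rfl
    have h2 : (tm.map f).sum = ∑ j ∈ lam.support, f (lam j) := by
      rw [htm, Multiset.map_map]; rfl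
    rw [h1, ← sum_map_filter_pos _ _ hf, ← hs, hst, h2, hsupp]
  have hG2 : finrank 𝕜 ↥(Subalgebra.centralizer 𝕜 ({x} : Set (Module.End 𝕜 V)))
      = ∑ j ∈ Finset.range ℓ, D (lam j) := by
    rw [hkb]
    exact hsum D hD0
  refine ⟨?_, hG2⟩
  -- goal 1
  rw [hG2]
  obtain ⟨e, he⟩ := hx
  have hn : finrank 𝕜 V = ∑ i ∈ Finset.range ℓ, lam i := by
    have hT : x ^ (e + lam 0) = 0 := by rw [pow_add, he, zero_mul]
    have h1 : finrank 𝕜 ↥(LinearMap.ker (x ^ (e + lam 0))) = finrank 𝕜 V := by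
      rw [hT, LinearMap.ker_zero, finrank_top]
    rw [← h1, hker, Finsupp.sum]
    refine Finset.sum_congr hsupp fun i hi => ?_
    exact min_eq_left (le_trans (hlam (Nat.zero_le i)) (by omega))
  have hr : (lam.sum fun i m => i * m) = ∑ i ∈ Finset.range ℓ, i * lam i := by
    rw [Finsupp.sum]
    exact Finset.sum_congr hsupp fun _ _ => rfl
  rw [hn, hr]
  have hDj : ∀ j ∈ Finset.range ℓ, D (lam j) = ∑ i ∈ Finset.range ℓ, min (lam i) (lam j) := by
    intro j _
    rw [hD]
    dsimp only
    rw [hker, Finsupp.sum]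
    exact Finset.sum_congr hsupp fun _ _ => rfl
  rw [Finset.sum_congr rfl hDj]
  have key : ∀ j ∈ Finset.range ℓ, (∑ i ∈ Finset.range ℓ, min (lam i) (lam j))
      = (j+1) * lam j + ∑ i ∈ Finset.Ico (j+1) ℓ, lam i := by
    intro j hj
    rw [Finset.mem_range] at hj
    rw [Finset.range_eq_Ico,
      ← Finset.sum_Ico_consecutive _ (Nat.zero_le (j+1)) (by omega : j+1 ≤ ℓ)]
    congr 1
    · rw [← Finset.range_eq_Ico,
        Finset.sum_congr rfl (fun i hi => min_eq_right
          (hlam (by rw [Finset.mem_range] at hi; omega : i ≤ j))),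
        Finset.sum_const, Finset.card_range, smul_eq_mul]
    · refine Finset.sum_congr rfl fun i hi => min_eq_left (hlam ?_)
      rw [Finset.mem_Ico] at hi
      omega
  rw [Finset.sum_congr rfl key, Finset.sum_add_distrib]
  have swap : (∑ j ∈ Finset.range ℓ, ∑ i ∈ Finset.Ico (j+1) ℓ, lam i)
      = ∑ i ∈ Finset.range ℓ, i * lam i := by
    rw [Finset.sum_comm' (s' := fun i => Finset.range i) (t' := Finset.range ℓ)
      (fun j i => by
        simp only [Finset.mem_range, Finset.mem_Ico]
        omega)]
    refine Finset.sum_congr rfl fun i _ => ?_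
    rw [Finset.sum_const, Finset.card_range, smul_eq_mul]
  rw [swap]
  have hsplit : (∑ j ∈ Finset.range ℓ, (j+1) * lam j)
      = (∑ j ∈ Finset.range ℓ, lam j) + ∑ j ∈ Finset.range ℓ, j * lam j := by
    rw [← Finset.sum_add_distrib]
    exact Finset.sum_congr rfl fun j _ => by ring
  rw [hsplit]
  ring
end
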